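/- If a language L over a finite alphabet admits only finitely many special factors, then there exists a finite set T of pairs of words such that every word of L has the form x y^n for some (x, y) ∈ T and n ∈ ℕ. -/

import Mathlib

/-- `x` is a factor (contiguous substring) of some word in the language `L`. -/
def IsFactor {A : Type*} (x : List A) (L : Set (List A)) : Prop :=
  ∃ w ∈ L, x <:+: w

/-- The complexity function of a language: number of `n`-length factors. -/
noncomputable def complexity {A : Type*} (L : Set (List A)) (n : ℕ) : ℕ :=
  Nat.card {x : List A // x.length = n ∧ IsFactor x L}

/-- `w` is a special factor of `L`. -/
def IsSpecial {A : Type*} (w : List A) (L : Set (List A)) : Prop :=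
  ∃ a b : A, a ≠ b ∧ IsFactor (w ++ [a]) L ∧ IsFactor (w ++ [b]) L

/-- A language is (right-)extendable. -/
def Extendable {A : Type*} (L : Set (List A)) : Prop :=
  ∀ w ∈ L, ∃ a : A, w ++ [a] ∈ L

private lemma getElem_idx_congr {A : Type*} {l : List A} {i j : ℕ} (hij : i = j)
    (hi : i < l.length) : l[i] = l[j]'(hij ▸ hi) := by subst hij; rfl

/-- A list of length `n*q` which is `q`-periodic is the `n`-fold repetition of its
first `q` letters. -/
private lemma periodic_flatten {A : Type*} {q : ℕ} (hq : 0 < q) :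
    ∀ (n : ℕ) (l : List A), l.length = n * q →
    (∀ k (h2 : k + q < l.length), l[k + q] = l[k]'(by omega)) →
    l = (List.replicate n (l.take q)).flatten := by
  intro n
  induction n with
  | zero =>
    intro l hl _
    simp only [Nat.zero_mul] at hl
    simp [List.length_eq_zero_iff.mp hl]
  | succ n ih =>
    intro l hl hper
    have hlen : l.length = n * q + q := by rw [hl]; ring
    have hdl : (l.drop q).length = n * q := by simp [hlen]
    have hdrop : l.drop q = (List.replicate n ((l.drop q).take q)).flatten := by
      apply ih _ hdl
      intro k h2
      have hk2 : q + (k + q) < l.length := by simp at h2; omega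
      have e1 : (l.drop q)[k + q] = l[q + (k + q)]'hk2 := List.getElem_drop
      have e2 : (l.drop q)[k]'(by omega) = l[q + k]'(by omega) := List.getElem_drop
      rw [e1, e2]
      have h3 : (q + k) + q < l.length := by omega
      have := hper (q + k) h3
      calc l[q + (k + q)]'hk2 = l[(q + k) + q]'h3 := getElem_idx_congr (by omega) _
        _ = l[q + k]'(by omega) := this
    rcases Nat.eq_zero_or_pos n with hn | hn
    · subst hn
      have h2 : l.take q = l := List.take_of_length_le (by omega)
      simp [h2]
    · have hqn : q ≤ n * q := Nat.le_mul_of_pos_left q hn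
      have htake : (l.drop q).take q = l.take q := by
        apply List.ext_getElem
        · simp [hlen]; omega
        · intro t h1 h2
          have htq : t < q := by
            have := h2; simp [hlen] at this; omega
          have hx : q + t < l.length := by simp [hlen]; omega
          have g1 : ((l.drop q).take q)[t]'h1 = (l.drop q)[t]'(by simp [hlen]; omega) :=
            List.getElem_take
          have g2 : (l.drop q)[t]'(by simp [hlen]; omega) = l[q + t]'hx := List.getElem_drop
          have g3 : ((l.take q))[t]'h2 = l[t]'(by omega) := List.getElem_take
          rw [g1, g2, g3]
          have h3 : t + q < l.length := by simp [hlen]; omega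
          calc l[q + t]'hx = l[t + q]'h3 := getElem_idx_congr (by omega) _
            _ = l[t]'(by omega) := hper t h3
      nth_rewrite 1 [← List.take_append_drop q l]
      rw [hdrop, htake, List.replicate_succ, List.flatten_cons]

theorem stmt_9 {A : Type*} [Fintype A] (L : Set (List A))
    (h : {w : List A | IsSpecial w L}.Finite) :
    ∃ T : Finset (List A × List A), ∀ w ∈ L, ∃ p ∈ T, ∃ n : ℕ, w = p.1 ++ (List.replicate n p.2).flatten := by
  classical
  set N := h.toFinset.sup List.length + 1 with hN
  have hdet : ∀ (u : List A) (a b : A), N ≤ u.length →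
      IsFactor (u ++ [a]) L → IsFactor (u ++ [b]) L → a = b := by
    intro u a b hu ha hb
    by_contra hab
    have hmem : u ∈ h.toFinset := h.mem_toFinset.mpr ⟨a, b, hab, ha, hb⟩
    have := Finset.le_sup (f := List.length) hmem
    omega
  set K := Fintype.card (List.Vector A N) with hK
  set M := N + 2 * K + 2 with hM
  refine ⟨((List.finite_length_le A M).prod (List.finite_length_le A M)).toFinset, ?_⟩
  intro w hw
  have hwfac : ∀ i m : ℕ, IsFactor ((w.drop i).take m) L := by
    intro i m
    exact ⟨w, hw, w.take i, (w.drop i).drop m, by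
      rw [List.append_assoc, List.take_append_drop, List.take_append_drop]⟩
  by_cases hlen : w.length ≤ N + K
  · refine ⟨(w, []), ?_, 0, by simp⟩
    rw [Set.Finite.mem_toFinset, Set.mem_prod]
    constructor <;> simp <;> omega
  · push_neg at hlen
    -- pigeonhole on windows of length N at positions 0..K
    have hwin_len : ∀ i : ℕ, i ≤ K → ((w.drop i).take N).length = N := by
      intro i hi; simp; omega
    set f : Fin (K + 1) → List.Vector A N :=
      fun i => ⟨(w.drop i.val).take N, hwin_len i.val (by omega)⟩ with hf
    obtain ⟨i0, j0, hne, heq⟩ := Fintype.exists_ne_map_eq_of_card_lt f (by simp [hK])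
    have key : ∃ i j : ℕ, i < j ∧ j ≤ K ∧ (w.drop i).take N = (w.drop j).take N := by
      rcases Nat.lt_or_ge i0.val j0.val with hlt | hge
      · exact ⟨i0.val, j0.val, hlt, by omega, congrArg Subtype.val heq⟩
      · have hlt : j0.val < i0.val := by
          rcases Nat.lt_or_ge j0.val i0.val with h' | h'
          · exact h'
          · exact absurd (Fin.ext (by omega)) hne
        exact ⟨j0.val, i0.val, hlt, by omega, (congrArg Subtype.val heq).symm⟩
    obtain ⟨i, j, hij, hjK, hwin⟩ := key
    set q := j - i with hqdef
    have hq : 0 < q := by omega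
    have hjiq : j = i + q := by omega
    -- equality of window entries
    have hwin' : ∀ t : ℕ, t < N → ∀ (h1 : i + t < w.length) (h2 : j + t < w.length),
        w[i + t] = w[j + t] := by
      intro t ht h1 h2
      have g1 : ((w.drop i).take N)[t]'(by rw [hwin_len i (by omega)]; exact ht) =
          w[i + t]'h1 := by
        rw [List.getElem_take, List.getElem_drop]
      have g2 : ((w.drop j).take N)[t]'(by rw [hwin_len j hjK]; exact ht) =
          w[j + t]'h2 := by
        rw [List.getElem_take, List.getElem_drop]
      rw [← g1, ← g2]
      congr 1
    -- periodicity propagation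
    have hper : ∀ k, i ≤ k → ∀ (hk : k + q < w.length), w[k + q] = w[k]'(by omega) := by
      intro k
      induction k using Nat.strong_induction_on with
      | _ k IH =>
        intro hik hk
        by_cases hkN : k < i + N
        · have h1 : i + (k - i) < w.length := by omega
          have h2 : j + (k - i) < w.length := by omega
          have := hwin' (k - i) (by omega) h1 h2
          calc w[k + q] = w[j + (k - i)]'h2 := getElem_idx_congr (by omega) _
            _ = w[i + (k - i)]'h1 := this.symm
            _ = w[k]'(by omega) := getElem_idx_congr (by omega) _
        · set m := k - N with hmdef
          have hmk : m + N = k := by omega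
          have him : i ≤ m := by omega
          have hulen : ((w.drop m).take N).length = N := by simp; omega
          have hu'len : ((w.drop (m + q)).take N).length = N := by simp; omega
          have hu : (w.drop m).take N = (w.drop (m + q)).take N := by
            apply List.ext_getElem (by rw [hulen, hu'len])
            intro t h1 h2
            have htN : t < N := by rwa [hulen] at h1
            have hx1 : m + t < w.length := by omega
            have hx2 : (m + t) + q < w.length := by omega
            have g1 : ((w.drop m).take N)[t]'h1 = w[m + t]'hx1 := by
              rw [List.getElem_take, List.getElem_drop]
            have g2 : ((w.drop (m + q)).take N)[t]'h2 =
                w[(m + q) + t]'(by omega) := by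
              rw [List.getElem_take, List.getElem_drop]
            rw [g1, g2]
            calc w[m + t]'hx1 = w[(m + t) + q]'hx2 :=
                  (IH (m + t) (by omega) (by omega) hx2).symm
              _ = w[(m + q) + t]'(by omega) := getElem_idx_congr (by omega) _
          have hkw : k < w.length := by omega
          have hfac1 : IsFactor ((w.drop m).take N ++ [w[k]'hkw]) L := by
            have e : (w.drop m)[N]'(by simp; omega) = w[m + N] := List.getElem_drop
            have e2 : w[m + N]'(by omega) = w[k]'hkw := getElem_idx_congr (by omega) _
            have := List.take_concat_get' (w.drop m) N (by simp; omega)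
            rw [e, e2] at this
            rw [this]; exact hwfac m (N + 1)
          have hfac2 : IsFactor ((w.drop m).take N ++ [w[k + q]'hk]) L := by
            rw [hu]
            have e : (w.drop (m + q))[N]'(by simp; omega) = w[(m + q) + N] :=
              List.getElem_drop
            have e2 : w[(m + q) + N]'(by omega) = w[k + q]'hk :=
              getElem_idx_congr (by omega) _
            have := List.take_concat_get' (w.drop (m + q)) N (by simp; omega)
            rw [e, e2] at this
            rw [this]; exact hwfac (m + q) (N + 1)
          exact hdet _ _ _ (by rw [hulen]) hfac2 hfac1
    -- assemble the power decomposition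
    set r := (w.length - i) % q with hr
    set s := i + r with hs
    set n := (w.length - i) / q with hn
    have hrq : r < q := Nat.mod_lt _ hq
    have hsw : s ≤ w.length := by omega
    have h1 : n * q + r = w.length - i := by
      rw [hn, hr, Nat.mul_comm]
      exact Nat.div_add_mod _ _
    have hdlen : (w.drop s).length = n * q := by
      simp only [List.length_drop]
      omega
    have hper' : ∀ k (h2 : k + q < (w.drop s).length),
        (w.drop s)[k + q] = (w.drop s)[k]'(by omega) := by
      intro k h2
      have hb : k + q < w.length - s := by simpa using h2
      have hx1 : s + (k + q) < w.length := by omega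
      have hx2 : (s + k) + q < w.length := by omega
      have e1 : (w.drop s)[k + q] = w[s + (k + q)]'hx1 := List.getElem_drop
      have e2 : (w.drop s)[k]'(by omega) = w[s + k]'(by omega) := List.getElem_drop
      rw [e1, e2]
      calc w[s + (k + q)]'hx1 = w[(s + k) + q]'hx2 := getElem_idx_congr (by omega) _
        _ = w[s + k]'(by omega) := hper (s + k) (by omega) hx2
    have hflat := periodic_flatten hq n (w.drop s) hdlen hper'
    have hsM : s ≤ M := by omega
    refine ⟨(w.take s, (w.drop s).take q), ?_, n, ?_⟩
    · rw [Set.Finite.mem_toFinset, Set.mem_prod]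
      refine ⟨?_, ?_⟩ <;>
        simp only [Set.mem_setOf_eq, List.length_take, List.length_drop] <;> omega
    · simp only
      rw [← hflat, List.take_append_drop]
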